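/- Let N and N₁ be n×n nilpotent matrices over a field k such that (1 − t⁻¹N)⁻¹(1 − t⁻¹N₁) lies in SL_n(k[t]) (i.e., has all entries in k[t]). Then N = N₁. -/

import Mathlib

open LaurentPolynomial

/-- if N, N₁ are nilpotent n×n matrices over a field k and the matrix
(1 − t⁻¹N)⁻¹(1 − t⁻¹N₁) over k[t,t⁻¹] has all entries in k[t], then N = N₁.
(Injectivity of Lusztig's embedding.) -/
theorem lusztig_embedding_injective (k : Type*) [Field k] (n : ℕ)
    (N N₁ : Matrix (Fin n) (Fin n) k) (hN : IsNilpotent N) (hN₁ : IsNilpotent N₁)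
    (h : ∀ i j : Fin n, ∃ p : Polynomial k,
      Polynomial.toLaurent p =
        ((((1 : Matrix (Fin n) (Fin n) (LaurentPolynomial k))
              - (T (-1) : LaurentPolynomial k) • N.map (LaurentPolynomial.C))⁻¹)
          * ((1 : Matrix (Fin n) (Fin n) (LaurentPolynomial k))
              - (T (-1) : LaurentPolynomial k) • N₁.map (LaurentPolynomial.C))) i j) :
    N = N₁ := by
  classical
  obtain ⟨m₀, hm₀⟩ := hN
  clear hN₁
  set m : ℕ := m₀ + 2 with hmdef
  have hm : N ^ m = 0 := by rw [hmdef, pow_add, hm₀, zero_mul]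
  set x : Matrix (Fin n) (Fin n) (LaurentPolynomial k) :=
      (T (-1) : LaurentPolynomial k) • N.map LaurentPolynomial.C with hx
  set x₁ : Matrix (Fin n) (Fin n) (LaurentPolynomial k) :=
      (T (-1) : LaurentPolynomial k) • N₁.map LaurentPolynomial.C with hx₁
  have hmappow : ∀ l : ℕ, (N.map (LaurentPolynomial.C (R := k))) ^ l
      = (N ^ l).map LaurentPolynomial.C := by
    intro l
    simpa [RingHom.mapMatrix_apply] using
      (map_pow ((LaurentPolynomial.C (R := k)).mapMatrix) N l).symm
  have hxpow : ∀ l : ℕ, x ^ l = (T (-(l : ℤ)) : LaurentPolynomial k) • (N ^ l).map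
      LaurentPolynomial.C := by
    intro l
    rw [hx, smul_pow, T_pow, hmappow]
    congr 2
    push_cast
    ring
  have hxm : x ^ m = 0 := by
    rw [hxpow m, hm]
    simp
  set S : Matrix (Fin n) (Fin n) (LaurentPolynomial k) :=
    ∑ l ∈ Finset.range m, x ^ l with hSdef
  have hS : (1 - x) * S = 1 := by
    have h1 : (x - 1) * S = x ^ m - 1 := mul_geom_sum x m
    have h2 : (1 - x) * S = -((x - 1) * S) := by rw [← neg_sub, neg_mul]
    rw [h2, h1, hxm, neg_sub, sub_zero]
  have hinv : (1 - x)⁻¹ = S := Matrix.inv_eq_right_inv hS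
  have hSmul : S * (1 - x₁) = ∑ l ∈ Finset.range m,
      ((T (-(l : ℤ)) : LaurentPolynomial k) • (N ^ l).map LaurentPolynomial.C
        - (T (-(l : ℤ) - 1) : LaurentPolynomial k) • ((N ^ l) * N₁).map LaurentPolynomial.C) := by
    rw [hSdef, Finset.sum_mul]
    refine Finset.sum_congr rfl fun l _ => ?_
    rw [mul_sub, mul_one, hxpow l, hx₁]
    congr 1
    rw [Matrix.smul_mul, Matrix.mul_smul, smul_smul, ← T_add,
      show (-(l : ℤ) + -1) = -(l : ℤ) - 1 from by ring, ← Matrix.map_mul]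
  have key : ∀ (M : Matrix (Fin n) (Fin n) k) (a b : ℤ) (i j : Fin n),
      (((T a : LaurentPolynomial k) • M.map LaurentPolynomial.C) i j).coeff b
        = if a = b then M i j else 0 := by
    intro M a b i j
    rw [Matrix.smul_apply, Matrix.map_apply, smul_eq_mul, mul_comm, ← single_eq_C_mul_T,
      AddMonoidAlgebra.coeff_single, Finsupp.single_apply]
  ext i j
  obtain ⟨p, hp⟩ := h i j
  rw [hinv] at hp
  have hzero : (Polynomial.toLaurent p).coeff (-1 : ℤ) = 0 := by
    rw [LaurentPolynomial.coeff_toLaurent]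
    apply Finsupp.mapDomain_notin_range
    simp
  have hval := congrArg (fun q : LaurentPolynomial k => q.coeff (-1 : ℤ)) hp
  rw [hzero, hSmul, Matrix.sum_apply] at hval
  rw [AddMonoidAlgebra.coeff_sum, Finsupp.finset_sum_apply] at hval
  have hterm : ∀ l ∈ Finset.range m,
      (((T (-(l : ℤ)) : LaurentPolynomial k) • (N ^ l).map LaurentPolynomial.C
        - (T (-(l : ℤ) - 1) : LaurentPolynomial k) • ((N ^ l) * N₁).map LaurentPolynomial.C)
          i j).coeff (-1 : ℤ)
      = (if l = 1 then (N ^ l) i j else 0) - (if l = 0 then ((N ^ l) * N₁) i j else 0) := by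
    intro l _
    rw [Matrix.sub_apply, AddMonoidAlgebra.coeff_sub, Finsupp.sub_apply, key, key]
    congr 1
    · exact if_congr (by omega) rfl rfl
    · exact if_congr (by omega) rfl rfl
  rw [Finset.sum_congr rfl hterm, Finset.sum_sub_distrib,
    Finset.sum_ite_eq' (Finset.range m) 1 (fun l => (N ^ l) i j),
    Finset.sum_ite_eq' (Finset.range m) 0 (fun l => ((N ^ l) * N₁) i j)] at hval
  have h1m : (1 : ℕ) ∈ Finset.range m := by simp [hmdef]
  have h0m : (0 : ℕ) ∈ Finset.range m := by simp [hmdef]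
  rw [if_pos h1m, if_pos h0m, pow_one, pow_zero, one_mul] at hval
  have := hval.symm
  rwa [sub_eq_zero] at this
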